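/- Let λ, r₀, r₂ be positive real numbers and let u : ℝ → ℝ be twice differentiable. Suppose that sup_{t∈ℝ} u(t) < ∞ and that u''(t) ≥ (λ/r₀²)·u'(t)² − r₀·r₂ for all t ∈ ℝ. Then u'(t)² ≤ r₀³·r₂/λ for all t ∈ ℝ. -/

import Mathlib

open Set Filter Topology

private lemma lh_aux (lam r₀ r₂ : ℝ) (hlam : 0 < lam) (hr₀ : 0 < r₀) (hr₂ : 0 < r₂)
    (u : ℝ → ℝ) (hu : Differentiable ℝ u) (hu' : Differentiable ℝ (deriv u))
    (hbdd : BddAbove (Set.range u))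
    (hineq : ∀ t : ℝ, (lam / r₀ ^ 2) * (deriv u t) ^ 2 - r₀ * r₂ ≤ deriv (deriv u) t)
    (t₀ : ℝ) (hpos : 0 < deriv u t₀)
    (hsq : r₀ ^ 3 * r₂ / lam < (deriv u t₀) ^ 2) : False := by
  set v := deriv u with hv
  set M := v t₀ with hM
  have hkey : ∀ x : ℝ, M ≤ x → 0 < (lam / r₀ ^ 2) * x ^ 2 - r₀ * r₂ := by
    intro x hx
    have h1 : M ^ 2 ≤ x ^ 2 := by nlinarith
    have h2 : r₀ ^ 3 * r₂ / lam < x ^ 2 := lt_of_lt_of_le hsq h1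
    have h3 : r₀ ^ 3 * r₂ < lam * x ^ 2 := by
      rw [div_lt_iff₀ hlam] at h2
      nlinarith [h2]
    have hr2 : (0:ℝ) < r₀ ^ 2 := by positivity
    rw [div_mul_eq_mul_div, sub_pos, lt_div_iff₀ hr2]
    nlinarith
  have hvc : Continuous v := hu'.continuous
  have claim : ∀ t, t₀ ≤ t → M ≤ v t := by
    by_contra hcl
    push_neg at hcl
    set A := {t : ℝ | t₀ ≤ t ∧ v t < M} with hA
    have hAne : A.Nonempty := by
      obtain ⟨t, ht, hvt⟩ := hcl
      exact ⟨t, ht, hvt⟩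
    have hAbd : BddBelow A := ⟨t₀, fun s hs => hs.1⟩
    set τ := sInf A with hτ
    have hτle : t₀ ≤ τ := le_csInf hAne fun s hs => hs.1
    have hbelow : ∀ s, t₀ ≤ s → s < τ → M ≤ v s := by
      intro s hs hsτ
      by_contra hvs
      push_neg at hvs
      exact absurd (csInf_le hAbd ⟨hs, hvs⟩) (not_le.mpr hsτ)
    have hvτ : M ≤ v τ := by
      rcases eq_or_lt_of_le hτle with h | h
      · rw [← h]
      · have htend : Tendsto v (𝓝[<] τ) (𝓝 (v τ)) :=
          (hvc.continuousAt).continuousWithinAt.tendsto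
        refine ge_of_tendsto htend ?_
        filter_upwards [Ioo_mem_nhdsLT_of_mem ⟨h, le_refl τ⟩] with s hs
        exact hbelow s hs.1.le hs.2
    have hτnotA : τ ∉ A := fun hτA => absurd hτA.2 (not_lt.mpr hvτ)
    have hd : 0 < deriv v τ := lt_of_lt_of_le (hkey (v τ) hvτ) (hineq τ)
    have hdτ : HasDerivAt v (deriv v τ) τ := (hu' τ).hasDerivAt
    have hslope : ∀ᶠ s in 𝓝[≠] τ, 0 < slope v τ s :=
      (hasDerivAt_iff_tendsto_slope.mp hdτ) (Ioi_mem_nhds hd)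
    rw [eventually_nhdsWithin_iff, Metric.eventually_nhds_iff] at hslope
    obtain ⟨δ, hδ, hδs⟩ := hslope
    obtain ⟨s, hsA, hsδ⟩ := exists_lt_of_csInf_lt hAne (by linarith : sInf A < τ + δ)
    have hsτ : τ ≤ s := csInf_le hAbd hsA
    have hsne : s ≠ τ := fun h => hτnotA (h ▸ hsA)
    have hdist : dist s τ < δ := by
      rw [Real.dist_eq, abs_of_nonneg (by linarith : (0:ℝ) ≤ s - τ)]
      linarith
    have hsl := hδs hdist hsne
    rw [slope_def_field] at hsl
    have hslt : τ < s := lt_of_le_of_ne hsτ (Ne.symm hsne)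
    have hvlt : v τ < v s := by
      rw [div_pos_iff] at hsl
      rcases hsl with ⟨h3, _⟩ | ⟨_, h4⟩
      · linarith
      · linarith
    exact absurd hsA.2 (not_lt.mpr (le_trans hvτ hvlt.le))
  obtain ⟨B, hB⟩ := hbdd
  have hBt₀ : u t₀ ≤ B := hB ⟨t₀, rfl⟩
  set T := t₀ + (B + 1 - u t₀) / M with hT
  have hTpos : t₀ < T := by
    have h0 : 0 < (B + 1 - u t₀) / M := div_pos (by linarith) hpos
    rw [hT]
    linarith
  obtain ⟨c, hc, hceq⟩ := exists_deriv_eq_slope u hTpos (hu.continuous.continuousOn)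
    (hu.differentiableOn)
  have hMc : M ≤ v c := claim c (le_of_lt hc.1)
  have hTt : 0 < T - t₀ := by linarith
  have hstep : M * (T - t₀) ≤ u T - u t₀ := by
    have h1 : (u T - u t₀) = deriv u c * (T - t₀) := by
      rw [hceq]; field_simp
    rw [h1]
    have : deriv u c = v c := rfl
    nlinarith
  have hMT : M * (T - t₀) = B + 1 - u t₀ := by
    have hM0 : M ≠ 0 := ne_of_gt hpos
    rw [hT]
    field_simp
    ring
  have hBu : u T ≤ B := hB ⟨T, rfl⟩
  linarith

/-- Let `λ, r₀, r₂` be positive reals and `u : ℝ → ℝ` twice differentiable.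
If `sup u < ∞` and `u''(t) ≥ (λ/r₀²)·u'(t)² − r₀·r₂` for all `t`, then
`u'(t)² ≤ r₀³·r₂/λ` for all `t`. -/
theorem landau_hadamard_core (lam r₀ r₂ : ℝ) (hlam : 0 < lam) (hr₀ : 0 < r₀) (hr₂ : 0 < r₂)
    (u : ℝ → ℝ) (hu : Differentiable ℝ u) (hu' : Differentiable ℝ (deriv u))
    (hbdd : BddAbove (Set.range u))
    (hineq : ∀ t : ℝ, (lam / r₀ ^ 2) * (deriv u t) ^ 2 - r₀ * r₂ ≤ deriv (deriv u) t) :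
    ∀ t : ℝ, (deriv u t) ^ 2 ≤ r₀ ^ 3 * r₂ / lam := by
  intro t
  by_contra hcon
  push_neg at hcon
  rcases lt_trichotomy (deriv u t) 0 with hneg | hzero | hpos
  · -- time reversal
    set u₁ : ℝ → ℝ := fun s => u (-s) with hu₁def
    have hdu₁ : deriv u₁ = fun s => -deriv u (-s) := by
      funext s
      simp only [hu₁def]
      rw [deriv_comp_neg]
    have hu₁diff : Differentiable ℝ u₁ := hu.comp differentiable_neg
    have hu₁diff' : Differentiable ℝ (deriv u₁) := by
      rw [hdu₁]
      exact ((hu'.comp differentiable_neg).neg)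
    have hbdd₁ : BddAbove (Set.range u₁) :=
      hbdd.mono (Set.range_comp_subset_range (fun s : ℝ => -s) u)
    have hdd : ∀ s : ℝ, deriv (deriv u₁) s = deriv (deriv u) (-s) := by
      intro s
      rw [hdu₁]
      have : (fun s : ℝ => -deriv u (-s)) = fun s => -((fun x => deriv u (-x)) s) := rfl
      rw [this, deriv.fun_neg, deriv_comp_neg, neg_neg]
    have hineq₁ : ∀ s : ℝ,
        (lam / r₀ ^ 2) * (deriv u₁ s) ^ 2 - r₀ * r₂ ≤ deriv (deriv u₁) s := by
      intro s
      rw [hdd, hdu₁]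
      simpa using hineq (-s)
    have hpos₁ : 0 < deriv u₁ (-t) := by
      rw [hdu₁]; simp; linarith
    have hsq₁ : r₀ ^ 3 * r₂ / lam < (deriv u₁ (-t)) ^ 2 := by
      rw [hdu₁]; simpa using hcon
    exact lh_aux lam r₀ r₂ hlam hr₀ hr₂ u₁ hu₁diff hu₁diff' hbdd₁ hineq₁ (-t) hpos₁ hsq₁
  · rw [hzero] at hcon
    have : (0:ℝ) < r₀ ^ 3 * r₂ / lam := by positivity
    simp at hcon
    linarith
  · exact lh_aux lam r₀ r₂ hlam hr₀ hr₂ u hu hu' hbdd hineq t hpos hcon
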